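/- Let f in Q[[q]] be the unique solution of L1 f = 0 with constant coefficient 1. Then for each k in {0,1,2,3} there exists a unique element y = sum_{i=0}^{k} t^i * y_i of Q[[q]][t] (with y_i in Q[[q]]) such that L1~ y = 0, y_k = f, and the constant coefficient of y_i is 0 for every i < k. (These are the normalized solutions I_0, I_1, I_2, I_3 of the Picard-Fuchs equation at the point of maximal unipotent monodromy.) -/

import Mathlib

open PowerSeries

/-- The operator `D = q * d/dq` on `ℚ[[q]]`. -/
noncomputable def Dop (f : ℚ⟦X⟧) : ℚ⟦X⟧ := X * derivative ℚ f

/-- Coefficient of `D^4` in the Picard-Fuchs operator. -/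
noncomputable def A4 : ℚ⟦X⟧ := (1 - 289 * X - 57 * X ^ 2 + X ^ 3) * (1 - 3 * X) ^ 2
/-- Coefficient of `D^3` in the Picard-Fuchs operator. -/
noncomputable def A3 : ℚ⟦X⟧ := 4 * X * (3 * X - 1) * (143 + 57 * X - 87 * X ^ 2 + 3 * X ^ 3)
/-- Coefficient of `D^2` in the Picard-Fuchs operator. -/
noncomputable def A2 : ℚ⟦X⟧ :=
  2 * X * (-212 - 473 * X + 725 * X ^ 2 - 435 * X ^ 3 + 27 * X ^ 4)
/-- Coefficient of `D^1` in the Picard-Fuchs operator. -/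
noncomputable def A1 : ℚ⟦X⟧ :=
  2 * X * (-69 - 481 * X + 159 * X ^ 2 - 171 * X ^ 3 + 18 * X ^ 4)
/-- Coefficient of `D^0` in the Picard-Fuchs operator. -/
noncomputable def A0 : ℚ⟦X⟧ := X * (-17 - 202 * X - 8 * X ^ 2 - 54 * X ^ 3 + 9 * X ^ 4)

/-- The Picard-Fuchs operator of Rødland's mirror family of the Pfaffian
Calabi-Yau 3-fold, acting on `ℚ[[q]]` (here `q` is `PowerSeries.X`). -/
noncomputable def L1 (f : ℚ⟦X⟧) : ℚ⟦X⟧ :=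
  A4 * Dop^[4] f + A3 * Dop^[3] f + A2 * Dop^[2] f + A1 * Dop f + A0 * f

/-- The extension of `D` to the derivation on `ℚ[[q]][t]` with `D t = 1`
(where `t` plays the role of `ln q`). -/
noncomputable def Dt (y : Polynomial ℚ⟦X⟧) : Polynomial ℚ⟦X⟧ :=
  Polynomial.derivative y + y.sum fun n a => Polynomial.C (Dop a) * Polynomial.X ^ n

/-- The Picard-Fuchs operator acting on `ℚ[[q]][t]`, with `D` replaced by its
extension `Dt`. -/
noncomputable def L1t (y : Polynomial ℚ⟦X⟧) : Polynomial ℚ⟦X⟧ :=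
    Polynomial.C A4 * Dt^[4] y + Polynomial.C A3 * Dt^[3] y
  + Polynomial.C A2 * Dt^[2] y + Polynomial.C A1 * Dt y + Polynomial.C A0 * y

open Finset in
section
open PowerSeries

lemma Dop_zero : Dop 0 = 0 := by simp [Dop]

lemma Dop_add (a b : ℚ⟦X⟧) : Dop (a + b) = Dop a + Dop b := by
  simp [Dop, map_add, mul_add]

lemma Dop_nsmul (n : ℕ) (a : ℚ⟦X⟧) : Dop (n • a) = n • Dop a := by
  simp [Dop, map_nsmul, nsmul_eq_mul]; ring

lemma coeff_Dop (f : ℚ⟦X⟧) (n : ℕ) : coeff n (Dop f) = n * coeff n f := by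
  cases n with
  | zero => simp [Dop]
  | succ n =>
    rw [Dop, coeff_succ_X_mul, coeff_derivative]
    push_cast; ring

lemma coeff_Dop_iter (m : ℕ) (f : ℚ⟦X⟧) (n : ℕ) :
    coeff n (Dop^[m] f) = (n : ℚ) ^ m * coeff n f := by
  induction m with
  | zero => simp
  | succ m ih =>
    rw [Function.iterate_succ_apply', coeff_Dop, ih]
    ring

lemma constantCoeff_Dop (f : ℚ⟦X⟧) : constantCoeff (Dop f) = 0 := by
  simp [Dop]

lemma cA4 : constantCoeff A4 = 1 := by simp [A4]
lemma cA3 : constantCoeff A3 = 0 := by simp [A3]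
lemma cA2 : constantCoeff A2 = 0 := by simp [A2]
lemma cA1 : constantCoeff A1 = 0 := by simp [A1]
lemma cA0 : constantCoeff A0 = 0 := by simp [A0]

end
section
open PowerSeries Finset

/-- The coefficient array of the recursion defined by `L1`. -/
noncomputable def Qc (n i : ℕ) : ℚ :=
    coeff i A4 * ((n - i : ℕ) : ℚ) ^ 4 + coeff i A3 * ((n - i : ℕ) : ℚ) ^ 3
  + coeff i A2 * ((n - i : ℕ) : ℚ) ^ 2 + coeff i A1 * ((n - i : ℕ) : ℚ)
  + coeff i A0

lemma Qc_zero (n : ℕ) : Qc n 0 = (n : ℚ) ^ 4 := by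
  have h4 := cA4; have h3 := cA3; have h2 := cA2; have h1 := cA1; have h0 := cA0
  rw [← coeff_zero_eq_constantCoeff] at h4 h3 h2 h1 h0
  simp [Qc, h4, h3, h2, h1, h0]

lemma coeff_mul_iter (A f : ℚ⟦X⟧) (m n : ℕ) :
    coeff n (A * Dop^[m] f) =
      ∑ i ∈ range (n + 1), coeff i A * ((n - i : ℕ) : ℚ) ^ m * coeff (n - i) f := by
  rw [coeff_mul, Finset.Nat.sum_antidiagonal_eq_sum_range_succ_mk]
  exact Finset.sum_congr rfl fun i _ => by rw [coeff_Dop_iter]; ring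

lemma coeff_L1 (f : ℚ⟦X⟧) (n : ℕ) :
    coeff n (L1 f) = ∑ i ∈ range (n + 1), Qc n i * coeff (n - i) f := by
  rw [L1, map_add, map_add, map_add, map_add]
  rw [coeff_mul_iter, coeff_mul_iter, show Dop f = Dop^[1] f from rfl, coeff_mul_iter,
    show (A0 : ℚ⟦X⟧) * f = A0 * Dop^[0] f from rfl, coeff_mul_iter, coeff_mul_iter]
  rw [← Finset.sum_add_distrib, ← Finset.sum_add_distrib, ← Finset.sum_add_distrib,
    ← Finset.sum_add_distrib]
  exact Finset.sum_congr rfl fun i _ => by rw [Qc]; ring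

/-- Solution of the recursion `L1 u = g` with `u 0 = 0`. -/
noncomputable def Usol (g : ℚ⟦X⟧) : ℕ → ℚ
  | 0 => 0
  | (n + 1) =>
      (coeff (n + 1) g - ∑ i ∈ range (n + 1), Qc (n + 1) (i + 1) * Usol g (n - i))
        / ((n : ℚ) + 1) ^ 4
  decreasing_by exact Nat.lt_succ_of_le (Nat.sub_le n i)

lemma coeff_L1_mk (g : ℚ⟦X⟧) (hg : constantCoeff g = 0) (n : ℕ) :
    coeff n (L1 (mk (Usol g))) = coeff n g := by
  rw [coeff_L1]
  cases n with
  | zero => simp [Usol, coeff_zero_eq_constantCoeff, hg]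
  | succ n =>
    rw [Finset.sum_range_succ']
    have hne : ((n : ℚ) + 1) ^ 4 ≠ 0 := by positivity
    simp only [coeff_mk]
    rw [Qc_zero]
    have : ∀ i ∈ range (n + 1),
        Qc (n + 1) (i + 1) * Usol g (n + 1 - (i + 1)) = Qc (n + 1) (i + 1) * Usol g (n - i) := by
      intro i _; rw [Nat.succ_sub_succ]
    rw [Finset.sum_congr rfl this, Nat.sub_zero, Usol]
    push_cast
    field_simp
    ring

end
section
open PowerSeries Finset

lemma L1_unique_aux {u v g : ℚ⟦X⟧} (hu0 : constantCoeff u = 0)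
    (hv0 : constantCoeff v = 0) (hu : L1 u = g) (hv : L1 v = g) : u = v := by
  ext n
  induction n using Nat.strong_induction_on with
  | _ n ih =>
    cases n with
    | zero => simp [coeff_zero_eq_constantCoeff, hu0, hv0]
    | succ n =>
      have h1 := coeff_L1 u (n + 1)
      have h2 := coeff_L1 v (n + 1)
      rw [hu] at h1; rw [hv] at h2
      rw [Finset.sum_range_succ', Nat.sub_zero, Qc_zero] at h1 h2
      have hs : ∑ i ∈ range (n + 1), Qc (n + 1) (i + 1) * coeff (n + 1 - (i + 1)) u
          = ∑ i ∈ range (n + 1), Qc (n + 1) (i + 1) * coeff (n + 1 - (i + 1)) v := by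
        refine Finset.sum_congr rfl fun i hi => ?_
        rw [ih (n + 1 - (i + 1)) (by omega)]
      have hne : ((n + 1 : ℕ) : ℚ) ^ 4 ≠ 0 := by positivity
      have h3 : ((n + 1 : ℕ) : ℚ) ^ 4 * coeff (n + 1) u
          = ((n + 1 : ℕ) : ℚ) ^ 4 * coeff (n + 1) v := by linarith
      exact mul_left_cancel₀ hne h3

/-- Unique solvability of `L1 u = g` with `u(0) = 0`, for `g(0) = 0`. -/
lemma L1_solve (g : ℚ⟦X⟧) (hg : constantCoeff g = 0) :
    ∃! u : ℚ⟦X⟧, constantCoeff u = 0 ∧ L1 u = g := by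
  refine ⟨mk (Usol g), ⟨?_, ?_⟩, fun v hv => ?_⟩
  · simp [← coeff_zero_eq_constantCoeff, Usol]
  · ext n; exact coeff_L1_mk g hg n
  · exact L1_unique_aux hv.1 (by simp [← coeff_zero_eq_constantCoeff, Usol]) hv.2
      (by ext n; exact coeff_L1_mk g hg n)

end
section
open PowerSeries

/-- The action of `Dt` on coefficient sequences. -/
noncomputable def Tseq (c : ℕ → ℚ⟦X⟧) : ℕ → ℚ⟦X⟧ :=
  fun j => Dop (c j) + (j + 1) • c (j + 1)

lemma coeff_sum_part (y : Polynomial ℚ⟦X⟧) (j : ℕ) :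
    (y.sum fun n a => Polynomial.C (Dop a) * Polynomial.X ^ n).coeff j = Dop (y.coeff j) := by
  rw [Polynomial.sum, Polynomial.finset_sum_coeff]
  simp only [Polynomial.coeff_C_mul, Polynomial.coeff_X_pow]
  rw [Finset.sum_eq_single j]
  · simp
  · intro b _ hbj
    simp [Ne.symm hbj]
  · intro hj
    rw [Polynomial.notMem_support_iff.mp hj, Dop_zero]
    simp

lemma coeff_Dt (y : Polynomial ℚ⟦X⟧) (j : ℕ) :
    (Dt y).coeff j = Tseq y.coeff j := by
  rw [Dt, Polynomial.coeff_add, coeff_sum_part, Polynomial.coeff_derivative, Tseq]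
  rw [nsmul_eq_mul]
  push_cast
  ring

lemma coeff_Dt_iter (m : ℕ) (y : Polynomial ℚ⟦X⟧) (j : ℕ) :
    (Dt^[m] y).coeff j = Tseq^[m] y.coeff j := by
  induction m generalizing y j with
  | zero => rfl
  | succ m ih =>
    rw [Function.iterate_succ_apply, Function.iterate_succ_apply]
    rw [ih (Dt y)]
    have h : (Dt y).coeff = Tseq y.coeff := funext fun i => coeff_Dt y i
    rw [h]

lemma coeff_L1t (y : Polynomial ℚ⟦X⟧) (j : ℕ) :
    (L1t y).coeff j = A4 * Tseq^[4] y.coeff j + A3 * Tseq^[3] y.coeff j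
      + A2 * Tseq^[2] y.coeff j + A1 * Tseq y.coeff j + A0 * y.coeff j := by
  simp only [L1t, Polynomial.coeff_add, Polynomial.coeff_C_mul]
  rw [coeff_Dt_iter, coeff_Dt_iter, coeff_Dt_iter, coeff_Dt]

lemma Tseq_tail {c : ℕ → ℚ⟦X⟧} {N : ℕ} (h : ∀ i, N ≤ i → c i = 0) :
    ∀ m i, N ≤ i → Tseq^[m] c i = 0 := by
  intro m
  induction m with
  | zero => exact h
  | succ m ih =>
    intro i hi
    rw [Function.iterate_succ_apply', Tseq, ih i hi, ih (i + 1) (by omega), Dop_zero]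
    simp

end
section
open PowerSeries

/-- First derived operator of `L1`. -/
noncomputable def M1 (u : ℚ⟦X⟧) : ℚ⟦X⟧ :=
  4 • (A4 * Dop^[3] u) + 3 • (A3 * Dop^[2] u) + 2 • (A2 * Dop u) + A1 * u

/-- Second derived operator of `L1`. -/
noncomputable def M2 (u : ℚ⟦X⟧) : ℚ⟦X⟧ :=
  6 • (A4 * Dop^[2] u) + 3 • (A3 * Dop u) + A2 * u

/-- Third derived operator of `L1`. -/
noncomputable def M3 (u : ℚ⟦X⟧) : ℚ⟦X⟧ :=
  4 • (A4 * Dop u) + A3 * u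

lemma cM1 (u : ℚ⟦X⟧) : constantCoeff (M1 u) = 0 := by
  have h2 : Dop^[2] u = Dop (Dop u) := rfl
  have h3 : Dop^[3] u = Dop (Dop (Dop u)) := rfl
  simp [M1, h2, h3, map_add, map_mul, map_nsmul, constantCoeff_Dop, cA3, cA2, cA1]

lemma cM2 (u : ℚ⟦X⟧) : constantCoeff (M2 u) = 0 := by
  have h2 : Dop^[2] u = Dop (Dop u) := rfl
  simp [M2, h2, map_add, map_mul, map_nsmul, constantCoeff_Dop, cA3, cA2]

lemma cM3 (u : ℚ⟦X⟧) : constantCoeff (M3 u) = 0 := by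
  simp [M3, map_add, map_mul, map_nsmul, constantCoeff_Dop, cA3]

lemma iter_expand (u : ℚ⟦X⟧) : Dop^[4] u = Dop (Dop (Dop (Dop u))) := rfl
lemma iter_expand3 (u : ℚ⟦X⟧) : Dop^[3] u = Dop (Dop (Dop u)) := rfl
lemma iter_expand2 (u : ℚ⟦X⟧) : Dop^[2] u = Dop (Dop u) := rfl

lemma expand0 (Y : ℕ → ℚ⟦X⟧) :
    A4 * Tseq^[4] Y 0 + A3 * Tseq^[3] Y 0 + A2 * Tseq^[2] Y 0 + A1 * Tseq Y 0 + A0 * Y 0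
    = L1 (Y 0) + M1 (Y 1) + 2 • M2 (Y 2) + 6 • M3 (Y 3) + 24 • (A4 * Y 4) := by
  simp only [Function.iterate_succ_apply', Function.iterate_zero_apply, Tseq,
    Dop_add, Dop_nsmul, smul_add, smul_smul]
  simp only [L1, M1, M2, M3, iter_expand, iter_expand3, iter_expand2, nsmul_eq_mul]
  push_cast
  ring

lemma expand1 (Y : ℕ → ℚ⟦X⟧) :
    A4 * Tseq^[4] Y 1 + A3 * Tseq^[3] Y 1 + A2 * Tseq^[2] Y 1 + A1 * Tseq Y 1 + A0 * Y 1
    = L1 (Y 1) + 2 • M1 (Y 2) + 6 • M2 (Y 3) + 24 • M3 (Y 4) + 120 • (A4 * Y 5) := by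
  simp only [Function.iterate_succ_apply', Function.iterate_zero_apply, Tseq,
    Dop_add, Dop_nsmul, smul_add, smul_smul]
  simp only [L1, M1, M2, M3, iter_expand, iter_expand3, iter_expand2, nsmul_eq_mul]
  push_cast
  ring

lemma expand2 (Y : ℕ → ℚ⟦X⟧) :
    A4 * Tseq^[4] Y 2 + A3 * Tseq^[3] Y 2 + A2 * Tseq^[2] Y 2 + A1 * Tseq Y 2 + A0 * Y 2
    = L1 (Y 2) + 3 • M1 (Y 3) + 12 • M2 (Y 4) + 60 • M3 (Y 5) + 360 • (A4 * Y 6) := by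
  simp only [Function.iterate_succ_apply', Function.iterate_zero_apply, Tseq,
    Dop_add, Dop_nsmul, smul_add, smul_smul]
  simp only [L1, M1, M2, M3, iter_expand, iter_expand3, iter_expand2, nsmul_eq_mul]
  push_cast
  ring

lemma expand3 (Y : ℕ → ℚ⟦X⟧) :
    A4 * Tseq^[4] Y 3 + A3 * Tseq^[3] Y 3 + A2 * Tseq^[2] Y 3 + A1 * Tseq Y 3 + A0 * Y 3
    = L1 (Y 3) + 4 • M1 (Y 4) + 20 • M2 (Y 5) + 120 • M3 (Y 6) + 840 • (A4 * Y 7) := by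
  simp only [Function.iterate_succ_apply', Function.iterate_zero_apply, Tseq,
    Dop_add, Dop_nsmul, smul_add, smul_smul]
  simp only [L1, M1, M2, M3, iter_expand, iter_expand3, iter_expand2, nsmul_eq_mul]
  push_cast
  ring

end
section
open PowerSeries

lemma L1_zero : L1 0 = 0 := by
  simp [L1, iter_expand, iter_expand3, iter_expand2, Dop_zero]

lemma M1_zero : M1 0 = 0 := by simp [M1, iter_expand3, iter_expand2, Dop_zero]
lemma M2_zero : M2 0 = 0 := by simp [M2, iter_expand2, Dop_zero]
lemma M3_zero : M3 0 = 0 := by simp [M3, Dop_zero]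

lemma coeff_L1t_tail {y : Polynomial ℚ⟦X⟧} (h : ∀ i, 4 ≤ i → y.coeff i = 0)
    {j : ℕ} (hj : 4 ≤ j) : (L1t y).coeff j = 0 := by
  have h4 := Tseq_tail h 4 j hj
  have h3 := Tseq_tail h 3 j hj
  have h2 := Tseq_tail h 2 j hj
  have h1 := Tseq_tail h 1 j hj
  rw [coeff_L1t, h4, h3, h2, show Tseq y.coeff j = Tseq^[1] y.coeff j from rfl, h1, h j hj]
  simp

/-- Characterization of `L1t y = 0` for `y` of degree at most 3 via the four
coefficient equations. -/
lemma L1t_char {y : Polynomial ℚ⟦X⟧} (hN : ∀ i, 4 ≤ i → y.coeff i = 0) :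
    L1t y = 0 ↔
      (L1 (y.coeff 0) + M1 (y.coeff 1) + 2 * M2 (y.coeff 2) + 6 * M3 (y.coeff 3) = 0
      ∧ L1 (y.coeff 1) + 2 * M1 (y.coeff 2) + 6 * M2 (y.coeff 3) = 0
      ∧ L1 (y.coeff 2) + 3 * M1 (y.coeff 3) = 0
      ∧ L1 (y.coeff 3) = 0) := by
  constructor
  · intro h
    have hc : ∀ j, (L1t y).coeff j = 0 := fun j => by rw [h, Polynomial.coeff_zero]
    refine ⟨?_, ?_, ?_, ?_⟩
    · have h0 := hc 0
      rw [coeff_L1t, expand0] at h0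
      have h4 : y.coeff 4 = 0 := hN 4 (by norm_num)
      rw [h4] at h0
      simpa [nsmul_eq_mul] using h0
    · have h1 := hc 1
      rw [coeff_L1t, expand1] at h1
      rw [hN 4 (by norm_num), hN 5 (by norm_num), M3_zero] at h1
      simpa [nsmul_eq_mul] using h1
    · have h2 := hc 2
      rw [coeff_L1t, expand2] at h2
      rw [hN 4 (by norm_num), hN 5 (by norm_num), hN 6 (by norm_num),
        M2_zero, M3_zero] at h2
      simpa [nsmul_eq_mul] using h2
    · have h3 := hc 3
      rw [coeff_L1t, expand3] at h3
      rw [hN 4 (by norm_num), hN 5 (by norm_num), hN 6 (by norm_num), hN 7 (by norm_num),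
        M1_zero, M2_zero, M3_zero] at h3
      simpa [nsmul_eq_mul] using h3
  · rintro ⟨h0, h1, h2, h3⟩
    refine Polynomial.ext fun j => ?_
    rw [Polynomial.coeff_zero]
    match j with
    | 0 =>
      rw [coeff_L1t, expand0, hN 4 (by norm_num)]
      simpa [nsmul_eq_mul] using h0
    | 1 =>
      rw [coeff_L1t, expand1, hN 4 (by norm_num), hN 5 (by norm_num), M3_zero]
      simpa [nsmul_eq_mul] using h1
    | 2 =>
      rw [coeff_L1t, expand2, hN 4 (by norm_num), hN 5 (by norm_num), hN 6 (by norm_num),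
        M2_zero, M3_zero]
      simpa [nsmul_eq_mul] using h2
    | 3 =>
      rw [coeff_L1t, expand3, hN 4 (by norm_num), hN 5 (by norm_num), hN 6 (by norm_num),
        hN 7 (by norm_num), M1_zero, M2_zero, M3_zero]
      simpa [nsmul_eq_mul] using h3
    | (n + 4) => exact coeff_L1t_tail hN (by omega)

end
section
open PowerSeries

lemma tail_of_degree_le {y : Polynomial ℚ⟦X⟧} {k : ℕ} (h : y.degree ≤ (k : ℕ)) :
    ∀ i, k < i → y.coeff i = 0 := fun i hi =>
  Polynomial.coeff_eq_zero_of_degree_lt (lt_of_le_of_lt h (by exact_mod_cast hi))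

theorem pfaffian_normalized_solutions_existsUnique' (f : ℚ⟦X⟧)
    (hf₀ : constantCoeff f = 1) (hf : L1 f = 0) :
    ∀ k : ℕ, k ≤ 3 →
      ∃! y : Polynomial ℚ⟦X⟧,
        L1t y = 0 ∧ y.degree ≤ k ∧ y.coeff k = f ∧
          ∀ i < k, constantCoeff (y.coeff i) = 0 := by
  intro k hk
  interval_cases k
  · -- k = 0
    refine ⟨Polynomial.C f, ⟨?_, ?_, ?_, ?_⟩, ?_⟩
    · rw [L1t_char (fun i hi => by rw [Polynomial.coeff_C, if_neg (by omega)])]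
      rw [Polynomial.coeff_C, Polynomial.coeff_C, Polynomial.coeff_C, Polynomial.coeff_C]
      norm_num
      refine ⟨?_, ?_, ?_, L1_zero⟩
      · rw [hf, M1_zero, M2_zero, M3_zero]; ring
      · rw [L1_zero, M1_zero, M2_zero]; ring
      · rw [L1_zero, M1_zero]; ring
    · simpa using Polynomial.degree_C_le
    · simp
    · intro i hi; omega
    · rintro y' ⟨h1, h2, h3, h4⟩
      exact (Polynomial.eq_C_of_degree_le_zero (by simpa using h2)).trans (by rw [h3])
  · -- k = 1
    obtain ⟨y0, ⟨hy0c, hy0L⟩, hy0u⟩ := L1_solve (-(M1 f)) (by simp [cM1])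
    set y : Polynomial ℚ⟦X⟧ := Polynomial.C y0 + Polynomial.C f * Polynomial.X ^ 1 with hy
    have hcoef : ∀ i, y.coeff i = if i = 0 then y0 else if i = 1 then f else 0 := by
      intro i
      rcases i with _ | _ | i <;>
        simp [hy, Polynomial.coeff_C, Polynomial.coeff_X_pow]
    have hc0 : y.coeff 0 = y0 := by rw [hcoef]; norm_num
    have hc1 : y.coeff 1 = f := by rw [hcoef]; norm_num
    have hc2 : y.coeff 2 = 0 := by rw [hcoef]; norm_num
    have hc3 : y.coeff 3 = 0 := by rw [hcoef]; norm_num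
    have htail : ∀ i, 4 ≤ i → y.coeff i = 0 := fun i hi => by
      rw [hcoef, if_neg (by omega), if_neg (by omega)]
    refine ⟨y, ⟨?_, ?_, ?_, ?_⟩, ?_⟩
    · rw [L1t_char htail, hc0, hc1, hc2, hc3]
      refine ⟨?_, ?_, ?_, L1_zero⟩
      · rw [hy0L, M2_zero, M3_zero]; ring
      · rw [hf, M1_zero, M2_zero]; ring
      · rw [L1_zero, M1_zero]; ring
    · rw [hy]; compute_degree!
    · exact hc1
    · intro i hi
      have hi0 : i = 0 := by omega
      rw [hi0, hc0]; exact hy0c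
    · rintro y' ⟨h1, h2, h3, h4⟩
      have ht := tail_of_degree_le h2
      have hchar := (L1t_char (fun i hi => ht i (by omega))).mp h1
      have e0 := hchar.1
      rw [h3, ht 2 (by omega), ht 3 (by omega), M2_zero, M3_zero] at e0
      have hY0 : y'.coeff 0 = y0 := by
        refine hy0u _ ⟨h4 0 (by omega), ?_⟩
        linear_combination e0
      refine Polynomial.ext fun j => ?_
      match j with
      | 0 => rw [hY0, hc0]
      | 1 => rw [h3, hc1]
      | (n + 2) => rw [ht (n + 2) (by omega), hcoef, if_neg (by omega), if_neg (by omega)]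
  · -- k = 2
    obtain ⟨y1, ⟨hy1c, hy1L⟩, hy1u⟩ := L1_solve (-(2 * M1 f)) (by simp [cM1])
    obtain ⟨y0, ⟨hy0c, hy0L⟩, hy0u⟩ :=
      L1_solve (-(M1 y1 + 2 * M2 f)) (by simp [cM1, cM2])
    set y : Polynomial ℚ⟦X⟧ :=
      Polynomial.C y0 + Polynomial.C y1 * Polynomial.X ^ 1
        + Polynomial.C f * Polynomial.X ^ 2 with hy
    have hcoef : ∀ i, y.coeff i =
        if i = 0 then y0 else if i = 1 then y1 else if i = 2 then f else 0 := by
      intro i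
      rcases i with _ | _ | _ | i <;>
        simp [hy, Polynomial.coeff_C, Polynomial.coeff_X_pow]
    have hc0 : y.coeff 0 = y0 := by rw [hcoef]; norm_num
    have hc1 : y.coeff 1 = y1 := by rw [hcoef]; norm_num
    have hc2 : y.coeff 2 = f := by rw [hcoef]; norm_num
    have hc3 : y.coeff 3 = 0 := by rw [hcoef]; norm_num
    have htail : ∀ i, 4 ≤ i → y.coeff i = 0 := fun i hi => by
      rw [hcoef, if_neg (by omega), if_neg (by omega), if_neg (by omega)]
    refine ⟨y, ⟨?_, ?_, ?_, ?_⟩, ?_⟩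
    · rw [L1t_char htail, hc0, hc1, hc2, hc3]
      refine ⟨?_, ?_, ?_, L1_zero⟩
      · rw [hy0L, M3_zero]; ring
      · rw [hy1L, M2_zero]; ring
      · rw [hf, M1_zero]; ring
    · rw [hy]; compute_degree!
    · exact hc2
    · intro i hi
      interval_cases i
      · rw [hc0]; exact hy0c
      · rw [hc1]; exact hy1c
    · rintro y' ⟨h1, h2, h3, h4⟩
      have ht := tail_of_degree_le h2
      have hchar := (L1t_char (fun i hi => ht i (by omega))).mp h1
      have e1 := hchar.2.1
      rw [h3, ht 3 (by omega), M2_zero] at e1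
      have hY1 : y'.coeff 1 = y1 := by
        refine hy1u _ ⟨h4 1 (by omega), ?_⟩
        linear_combination e1
      have e0 := hchar.1
      rw [h3, ht 3 (by omega), M3_zero, hY1] at e0
      have hY0 : y'.coeff 0 = y0 := by
        refine hy0u _ ⟨h4 0 (by omega), ?_⟩
        linear_combination e0
      refine Polynomial.ext fun j => ?_
      match j with
      | 0 => rw [hY0, hc0]
      | 1 => rw [hY1, hc1]
      | 2 => rw [h3, hc2]
      | (n + 3) =>
        rw [ht (n + 3) (by omega), hcoef, if_neg (by omega), if_neg (by omega),
          if_neg (by omega)]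
  · -- k = 3
    obtain ⟨y2, ⟨hy2c, hy2L⟩, hy2u⟩ := L1_solve (-(3 * M1 f)) (by simp [cM1])
    obtain ⟨y1, ⟨hy1c, hy1L⟩, hy1u⟩ :=
      L1_solve (-(2 * M1 y2 + 6 * M2 f)) (by simp [cM1, cM2])
    obtain ⟨y0, ⟨hy0c, hy0L⟩, hy0u⟩ :=
      L1_solve (-(M1 y1 + 2 * M2 y2 + 6 * M3 f)) (by simp [cM1, cM2, cM3])
    set y : Polynomial ℚ⟦X⟧ :=
      Polynomial.C y0 + Polynomial.C y1 * Polynomial.X ^ 1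
        + Polynomial.C y2 * Polynomial.X ^ 2 + Polynomial.C f * Polynomial.X ^ 3 with hy
    have hcoef : ∀ i, y.coeff i =
        if i = 0 then y0 else if i = 1 then y1 else if i = 2 then y2
          else if i = 3 then f else 0 := by
      intro i
      rcases i with _ | _ | _ | _ | i <;>
        simp [hy, Polynomial.coeff_C, Polynomial.coeff_X_pow]
    have hc0 : y.coeff 0 = y0 := by rw [hcoef]; norm_num
    have hc1 : y.coeff 1 = y1 := by rw [hcoef]; norm_num
    have hc2 : y.coeff 2 = y2 := by rw [hcoef]; norm_num
    have hc3 : y.coeff 3 = f := by rw [hcoef]; norm_num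
    have htail : ∀ i, 4 ≤ i → y.coeff i = 0 := fun i hi => by
      rw [hcoef, if_neg (by omega), if_neg (by omega), if_neg (by omega), if_neg (by omega)]
    refine ⟨y, ⟨?_, ?_, ?_, ?_⟩, ?_⟩
    · rw [L1t_char htail, hc0, hc1, hc2, hc3]
      refine ⟨?_, ?_, ?_, hf⟩
      · rw [hy0L]; ring
      · rw [hy1L]; ring
      · rw [hy2L]; ring
    · rw [hy]; compute_degree!
    · exact hc3
    · intro i hi
      interval_cases i
      · rw [hc0]; exact hy0c
      · rw [hc1]; exact hy1c
      · rw [hc2]; exact hy2c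
    · rintro y' ⟨h1, h2, h3, h4⟩
      have ht := tail_of_degree_le h2
      have hchar := (L1t_char (fun i hi => ht i (by omega))).mp h1
      have e2 := hchar.2.2.1
      rw [h3] at e2
      have hY2 : y'.coeff 2 = y2 := by
        refine hy2u _ ⟨h4 2 (by omega), ?_⟩
        linear_combination e2
      have e1 := hchar.2.1
      rw [h3, hY2] at e1
      have hY1 : y'.coeff 1 = y1 := by
        refine hy1u _ ⟨h4 1 (by omega), ?_⟩
        linear_combination e1
      have e0 := hchar.1
      rw [h3, hY2, hY1] at e0
      have hY0 : y'.coeff 0 = y0 := by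
        refine hy0u _ ⟨h4 0 (by omega), ?_⟩
        linear_combination e0
      refine Polynomial.ext fun j => ?_
      match j with
      | 0 => rw [hY0, hc0]
      | 1 => rw [hY1, hc1]
      | 2 => rw [hY2, hc2]
      | 3 => rw [h3, hc3]
      | (n + 4) =>
        rw [ht (n + 4) (by omega), hcoef, if_neg (by omega), if_neg (by omega),
          if_neg (by omega), if_neg (by omega)]

end

/-- For each `k ∈ {0,1,2,3}` there is a unique solution `y = Σ_{i=0}^{k} t^i y_i` of the
Picard-Fuchs equation on `ℚ[[q]][t]` with top coefficient `y_k = f` (the holomorphic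
solution) and all lower coefficients vanishing at `q = 0`; these are the normalized
solutions `I₀, I₁, I₂, I₃` at the point of maximal unipotent monodromy. -/
theorem pfaffian_normalized_solutions_existsUnique (f : ℚ⟦X⟧)
    (hf₀ : constantCoeff f = 1) (hf : L1 f = 0) :
    ∀ k : ℕ, k ≤ 3 →
      ∃! y : Polynomial ℚ⟦X⟧,
        L1t y = 0 ∧ y.degree ≤ k ∧ y.coeff k = f ∧
          ∀ i < k, constantCoeff (y.coeff i) = 0 := by
  exact pfaffian_normalized_solutions_existsUnique' f hf₀ hf
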